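/- For the symmetric group S_{n+1} with its standard Coxeter generators, the quantity ∑_{w ∈ S_{n+1}} |P(w)\S_{n+1}| equals the number of ordered pairs (σ,τ) of permutations of {1,…,n+1} having no common rise, i.e. no index i ∈ {1,…,n} with both σ(i) < σ(i+1) and τ(i) < τ(i+1). -/

import Mathlib

open Equiv

/-- The Coxeter length of a permutation of `Fin (n+1)` with respect to the standard
generators `sᵢ = (i, i+1)`. -/
noncomputable def permLength {n : ℕ} (w : Perm (Fin (n + 1))) : ℕ :=
  sInf {k | ∃ l : List (Fin n),
    l.length = k ∧ (l.map fun i => Equiv.swap i.castSucc i.succ).prod = w}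

/-- The standard parabolic subgroup `P(w)` generated by the simple reflections `s`
with `ℓ(ws) > ℓ(w)`. -/
noncomputable def permP {n : ℕ} (w : Perm (Fin (n + 1))) : Subgroup (Perm (Fin (n + 1))) :=
  Subgroup.closure {x | ∃ i : Fin n, x = Equiv.swap i.castSucc i.succ ∧
    permLength w < permLength (w * Equiv.swap i.castSucc i.succ)}


namespace NCR
variable {n : ℕ}
variable {n : ℕ}

lemma perm_apply_inv_self {α : Type*} (f : Perm α) (x : α) : f (f⁻¹ x) = x :=
  f.apply_symm_apply x

def sg (i : Fin n) : Perm (Fin (n + 1)) := Equiv.swap i.castSucc i.succ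

lemma sg_apply (i : Fin n) (a : Fin (n + 1)) :
    sg i a = if a = i.castSucc then i.succ else if a = i.succ then i.castSucc else a := by
  simp [sg, Equiv.swap_apply_def]

lemma sg_castSucc (i : Fin n) : sg i i.castSucc = i.succ := Equiv.swap_apply_left _ _

lemma sg_succ (i : Fin n) : sg i i.succ = i.castSucc := Equiv.swap_apply_right _ _

lemma sg_mul_self (i : Fin n) : sg i * sg i = 1 := Equiv.swap_mul_self _ _

lemma sg_sg (i : Fin n) (a : Fin (n + 1)) : sg i (sg i a) = a := by
  simp [sg]

lemma sg_lt_sg {i : Fin n} {a b : Fin (n + 1)} (hab : a < b)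
    (hne : ¬(a = i.castSucc ∧ b = i.succ)) : sg i a < sg i b := by
  rw [sg_apply, sg_apply]
  split_ifs <;>
    (simp only [Fin.ext_iff, Fin.lt_def, Fin.coe_castSucc, Fin.val_succ, not_and] at *) <;> omega

def invSet (w : Perm (Fin (n + 1))) : Finset (Fin (n + 1) × Fin (n + 1)) :=
  Finset.univ.filter fun p => p.1 < p.2 ∧ w p.2 < w p.1

def invNum (w : Perm (Fin (n + 1))) : ℕ := (invSet w).card

lemma mem_invSet {w : Perm (Fin (n+1))} {p : Fin (n+1) × Fin (n+1)} :
    p ∈ invSet w ↔ p.1 < p.2 ∧ w p.2 < w p.1 := by simp [invSet]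

lemma invNum_mul_sg_of_ascent {w : Perm (Fin (n+1))} {i : Fin n}
    (h : w i.castSucc < w i.succ) : invNum (w * sg i) = invNum w + 1 := by
  have hP : (i.castSucc, i.succ) ∈ invSet (w * sg i) := by
    rw [mem_invSet]
    exact ⟨Fin.castSucc_lt_succ (i := i), by simpa [Perm.mul_apply, sg_castSucc, sg_succ] using h⟩
  have hcard : invNum w = ((invSet (w * sg i)).erase (i.castSucc, i.succ)).card := by
    apply Finset.card_bij' (fun p _ => (sg i p.1, sg i p.2)) (fun q _ => (sg i q.1, sg i q.2))
    · intro p hp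
      rw [mem_invSet] at hp
      obtain ⟨h1, h2⟩ := hp
      have hne : ¬(p.1 = i.castSucc ∧ p.2 = i.succ) := by
        rintro ⟨e1, e2⟩; rw [e1, e2] at h2; exact absurd h h2.asymm
      rw [Finset.mem_erase, mem_invSet]
      refine ⟨?_, sg_lt_sg h1 hne, ?_⟩
      · intro hc
        have c1 : sg i p.1 = i.castSucc := congrArg Prod.fst hc
        have c2 : sg i p.2 = i.succ := congrArg Prod.snd hc
        have e1 : p.1 = i.succ := by rw [← sg_sg i p.1, c1, sg_castSucc]
        have e2 : p.2 = i.castSucc := by rw [← sg_sg i p.2, c2, sg_succ]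
        rw [e1, e2] at h1
        exact absurd h1 (Fin.castSucc_lt_succ (i := i)).asymm
      · simpa [Perm.mul_apply, sg_sg] using h2
    · intro q hq
      rw [Finset.mem_erase, mem_invSet] at hq
      obtain ⟨hne0, h1, h2⟩ := hq
      have hne : ¬(q.1 = i.castSucc ∧ q.2 = i.succ) := by
        rintro ⟨e1, e2⟩; exact hne0 (Prod.ext e1 e2)
      rw [mem_invSet]
      refine ⟨sg_lt_sg h1 hne, ?_⟩
      simpa [Perm.mul_apply] using h2
    · intro p _; simp [sg_sg]
    · intro q _; simp [sg_sg]
  have h2 : (invSet (w * sg i)).card = ((invSet (w * sg i)).erase (i.castSucc, i.succ)).card + 1 := by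
    rw [Finset.card_erase_of_mem hP]
    have : 0 < (invSet (w * sg i)).card := Finset.card_pos.2 ⟨_, hP⟩
    omega
  simp only [invNum] at *
  omega

lemma invNum_mul_sg_of_descent {w : Perm (Fin (n+1))} {i : Fin n}
    (h : w i.succ < w i.castSucc) : invNum w = invNum (w * sg i) + 1 := by
  have := invNum_mul_sg_of_ascent (w := w * sg i) (i := i)
    (by simpa [Perm.mul_apply, sg_castSucc, sg_succ] using h)
  rw [mul_assoc, sg_mul_self, mul_one] at this
  exact this

lemma ne_apply {w : Perm (Fin (n+1))} (i : Fin n) : w i.castSucc ≠ w i.succ :=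
  fun hc => absurd (w.injective hc) (Fin.castSucc_lt_succ (i := i)).ne

lemma strictMono_perm_eq_one {w : Perm (Fin (n+1))} (hmono : StrictMono ⇑w) : w = 1 := by
  have hinv : StrictMono ⇑w⁻¹ := fun a b hab => by
    by_contra hc
    push_neg at hc
    have := hmono.monotone hc
    simp only [perm_apply_inv_self] at this
    exact absurd hab (not_lt.2 this)
  have inst : WellFoundedLT (Fin (n+1)) := inferInstance
  refine Equiv.ext fun x => le_antisymm ?_ ?_
  · have := @StrictMono.le_apply (Fin (n+1)) _ inst _ hinv (w x)
    simpa using this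
  · simpa using @StrictMono.le_apply (Fin (n+1)) _ inst _ hmono x

lemma invNum_eq_zero {w : Perm (Fin (n+1))} (h : invNum w = 0) : w = 1 := by
  have hmono : StrictMono ⇑w := by
    intro a b hab
    rcases lt_or_ge (w a) (w b) with hlt | hle
    · exact hlt
    have : (a, b) ∈ invSet w := by
      rw [mem_invSet]
      exact ⟨hab, lt_of_le_of_ne hle (fun hc => absurd (w.injective hc) hab.ne')⟩
    rw [invNum, Finset.card_eq_zero] at h
    rw [h] at this
    exact absurd this (Finset.notMem_empty _)
  exact strictMono_perm_eq_one hmono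

lemma exists_descent {w : Perm (Fin (n+1))} (h : w ≠ 1) : ∃ i : Fin n, w i.succ < w i.castSucc := by
  by_contra hc
  push_neg at hc
  have : StrictMono ⇑w := Fin.strictMono_iff_lt_succ.2 fun i =>
    lt_of_le_of_ne (hc i) (ne_apply i)
  exact h (strictMono_perm_eq_one this)

lemma invNum_one : invNum (1 : Perm (Fin (n+1))) = 0 := by
  rw [invNum, Finset.card_eq_zero]
  ext p
  simp only [mem_invSet, Finset.notMem_empty, iff_false, not_and, Perm.one_apply]
  exact fun h => h.asymm

lemma exists_word (w : Perm (Fin (n+1))) :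
    ∃ l : List (Fin n), l.length = invNum w ∧ (l.map sg).prod = w := by
  generalize hk : invNum w = k
  induction k using Nat.strong_induction_on generalizing w with
  | _ k ih =>
    rcases Nat.eq_zero_or_pos k with h0 | hpos
    · subst h0
      exact ⟨[], by simp, by simp [invNum_eq_zero hk]⟩
    · have hw : w ≠ 1 := fun hc => by rw [hc, invNum_one] at hk; omega
      obtain ⟨i, hi⟩ := exists_descent hw
      have hdec := invNum_mul_sg_of_descent hi
      obtain ⟨l, hl, hp⟩ := ih (invNum (w * sg i)) (by omega) (w * sg i) rfl
      refine ⟨l ++ [i], by simp [hl]; omega, ?_⟩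
      rw [List.map_append, List.prod_append, hp]
      simp [mul_assoc, sg_mul_self]

lemma invNum_word_le (l : List (Fin n)) : invNum (l.map sg).prod ≤ l.length := by
  induction l using List.reverseRecOn with
  | nil => simp [invNum_one]
  | append_singleton l i ih =>
    rw [List.map_append, List.prod_append]
    simp only [List.map_cons, List.map_nil, List.prod_cons, List.prod_nil, mul_one,
      List.length_append, List.length_cons, List.length_nil]
    set g := (l.map sg).prod with hg
    rcases lt_or_ge (g i.castSucc) (g i.succ) with hasc | hle
    · rw [invNum_mul_sg_of_ascent hasc]; omega
    · have hdesc : g i.succ < g i.castSucc := lt_of_le_of_ne hle (ne_apply i).symm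
      have := invNum_mul_sg_of_descent hdesc
      omega

lemma permLength_eq (w : Perm (Fin (n+1))) : permLength w = invNum w := by
  apply le_antisymm
  · obtain ⟨l, hl, hp⟩ := exists_word w
    exact Nat.sInf_le ⟨l, hl, hp⟩
  · apply le_csInf
    · obtain ⟨l, hl, hp⟩ := exists_word w
      exact ⟨_, l, hl, hp⟩
    · rintro k ⟨l, hl, hp⟩
      calc invNum w = invNum (l.map sg).prod := by rw [show (l.map sg).prod = w from hp]
        _ ≤ l.length := invNum_word_le l
        _ = k := hl

lemma ascent_iff {w : Perm (Fin (n+1))} {i : Fin n} :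
    permLength w < permLength (w * sg i) ↔ w i.castSucc < w i.succ := by
  rw [permLength_eq, permLength_eq]
  constructor
  · intro h
    rcases lt_or_ge (w i.castSucc) (w i.succ) with hasc | hle
    · exact hasc
    · have hdesc : w i.succ < w i.castSucc := lt_of_le_of_ne hle (ne_apply i).symm
      have := invNum_mul_sg_of_descent hdesc
      omega
  · intro h
    rw [invNum_mul_sg_of_ascent h]
    omega


lemma invNum_le (w : Perm (Fin (n+1))) : invNum w ≤ (n+1)*(n+1) := by
  calc invNum w ≤ Finset.univ.card := Finset.card_filter_le _ _
    _ = (n+1)*(n+1) := by simp [Finset.card_univ]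

def GS (S : Fin n → Prop) : Subgroup (Perm (Fin (n + 1))) :=
  Subgroup.closure {x | ∃ i : Fin n, x = sg i ∧ S i}

/-- `x` and `y` are in the same block: every adjacent pair between them lies in `S`. -/
def sam (S : Fin n → Prop) (x y : Fin (n + 1)) : Prop :=
  ∀ i : Fin n, ((x.val ≤ i.val ∧ i.val + 1 ≤ y.val) ∨ (y.val ≤ i.val ∧ i.val + 1 ≤ x.val)) → S i

lemma sam_refl (S : Fin n → Prop) (x : Fin (n+1)) : sam S x x := by
  intro i hi; exact absurd hi (by omega)

lemma sam_symm {S : Fin n → Prop} {x y : Fin (n+1)} (h : sam S x y) : sam S y x := by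
  intro i hi; exact h i hi.symm

lemma sam_trans {S : Fin n → Prop} {x y z : Fin (n+1)} (h1 : sam S x y) (h2 : sam S y z) :
    sam S x z := by
  intro i hi
  rcases hi with ⟨ha, hb⟩ | ⟨ha, hb⟩
  · rcases le_or_gt (i.val + 1) y.val with hy | hy
    · exact h1 i (Or.inl ⟨ha, hy⟩)
    · exact h2 i (Or.inl ⟨by omega, hb⟩)
  · rcases le_or_gt (i.val + 1) y.val with hy | hy
    · exact h2 i (Or.inr ⟨ha, hy⟩)
    · exact h1 i (Or.inr ⟨by omega, hb⟩)

/-- The block subgroup: permutations moving every point within its block. -/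
def HS (S : Fin n → Prop) : Subgroup (Perm (Fin (n + 1))) where
  carrier := {h | ∀ x, sam S x (h x)}
  one_mem' := fun x => by simpa using sam_refl S x
  mul_mem' := by
    intro a b ha hb x
    exact sam_trans (hb x) (by simpa using ha (b x))
  inv_mem' := by
    intro a ha x
    have := ha (a⁻¹ x)
    simp only [perm_apply_inv_self] at this
    exact sam_symm this

lemma GS_le_HS (S : Fin n → Prop) : GS S ≤ HS S := by
  rw [GS, Subgroup.closure_le]
  rintro x ⟨i, rfl, hSi⟩
  intro a
  rw [sg_apply]
  split_ifs with h1 h2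
  · subst h1
    intro j hj
    have hj' : j = i := by
      apply Fin.ext
      simp only [Fin.coe_castSucc, Fin.val_succ] at hj
      omega
    rwa [hj']
  · subst h2
    intro j hj
    have hj' : j = i := by
      apply Fin.ext
      simp only [Fin.coe_castSucc, Fin.val_succ] at hj
      omega
    rwa [hj']
  · exact sam_refl S a

def Desc (S : Fin n → Prop) (τ : Perm (Fin (n+1))) : Prop :=
  ∀ i : Fin n, S i → τ i.succ < τ i.castSucc

lemma desc_adj {S : Fin n → Prop} {τ : Perm (Fin (n+1))} (hτ : Desc S τ)
    {x y : Fin (n+1)} (hxy : y.val = x.val + 1) (hsam : sam S x y) : τ y < τ x := by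
  have hx : x.val < n := by omega
  set i : Fin n := ⟨x.val, hx⟩ with hi
  have hS : S i := hsam i (Or.inl ⟨le_refl _, by simp [hi]; omega⟩)
  have e1 : i.castSucc = x := by apply Fin.ext; simp [hi]
  have e2 : i.succ = y := by apply Fin.ext; simp [hi]; omega
  have := hτ i hS
  rwa [e1, e2] at this

lemma desc_anti_aux {S : Fin n → Prop} {τ : Perm (Fin (n+1))} (hτ : Desc S τ) :
    ∀ (k : ℕ) (x y : Fin (n+1)), y.val = x.val + k + 1 → sam S x y → τ y < τ x := by
  intro k
  induction k with
  | zero => exact fun x y h hs => desc_adj hτ (by omega) hs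
  | succ k ih =>
    intro x y hval hsam
    have hy' : x.val + k + 1 < n + 1 := by omega
    set y' : Fin (n+1) := ⟨x.val + k + 1, hy'⟩ with hy'def
    have s1 : sam S x y' := by
      intro j hj; apply hsam j; simp only [hy'def] at hj ⊢; omega
    have s2 : sam S y' y := by
      intro j hj; apply hsam j; simp only [hy'def] at hj ⊢; omega
    exact lt_trans (desc_adj hτ (by simp [hy'def]; omega) s2) (ih x y' (by simp [hy'def]) s1)

lemma desc_anti {S : Fin n → Prop} {τ : Perm (Fin (n+1))} (hτ : Desc S τ)
    {x y : Fin (n+1)} (hxy : x < y) (hsam : sam S x y) : τ y < τ x := by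
  have : y.val = x.val + (y.val - x.val - 1) + 1 := by
    have := hxy; rw [Fin.lt_def] at this; omega
  exact desc_anti_aux hτ _ x y this hsam

lemma desc_unique {S : Fin n → Prop} {τ h : Perm (Fin (n+1))}
    (hh : h ∈ HS S) (h1 : Desc S τ) (h2 : Desc S (τ * h)) : h = 1 := by
  by_contra hne
  have hex : ∃ x, h x ≠ x := by
    by_contra hc
    push_neg at hc
    exact hne (Equiv.ext hc)
  classical
  set F : Finset (Fin (n+1)) := Finset.univ.filter (fun x => h x ≠ x) with hF
  have hFne : F.Nonempty := by
    obtain ⟨x, hx⟩ := hex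
    exact ⟨x, by simp [hF, hx]⟩
  set x := F.min' hFne with hxdef
  have hxmem : h x ≠ x := (Finset.mem_filter.1 (F.min'_mem hFne)).2
  have hmin : ∀ z, z < x → h z = z := by
    intro z hz
    by_contra hc
    have : x ≤ z := F.min'_le z (by simp [hF, hc])
    exact absurd hz (not_lt.2 this)
  -- h x > x
  have hxlt : x < h x := by
    rcases lt_trichotomy (h x) x with hlt | heq | hgt
    · have := hmin (h x) hlt
      exact absurd (h.injective this) (fun hc => hxmem (by rw [hc] at this; exact this))
    · exact absurd heq hxmem
    · exact hgt
  -- z := h⁻¹ x > x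
  have hzne : h⁻¹ x ≠ x := fun hc => hxmem (by nth_rewrite 1 [← hc]; rw [perm_apply_inv_self])
  have hzgt : x < h⁻¹ x := by
    rcases lt_trichotomy (h⁻¹ x) x with hlt | heq | hgt
    · have := hmin (h⁻¹ x) hlt
      rw [perm_apply_inv_self] at this
      exact absurd this.symm hzne
    · exact absurd heq hzne
    · exact hgt
  have sam1 : sam S x (h x) := hh x
  have sam2 : sam S x (h⁻¹ x) := by
    have := hh (h⁻¹ x)
    rw [perm_apply_inv_self] at this
    exact sam_symm this
  have c1 : τ (h x) < τ x := desc_anti h1 hxlt sam1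
  have c2 : τ x < τ (h x) := by
    have := desc_anti h2 hzgt sam2
    simpa [Perm.mul_apply, perm_apply_inv_self] using this
  exact absurd c1 c2.asymm


lemma exists_desc_aux (S : Fin n → Prop) :
    ∀ (k : ℕ) (g : Perm (Fin (n+1))), (n+1)*(n+1) - invNum g = k →
      ∃ h ∈ GS S, Desc S (g * h) := by
  intro k
  induction k using Nat.strong_induction_on with
  | _ k ih =>
    intro g hk
    classical
    by_cases hasc : ∃ i, S i ∧ g i.castSucc < g i.succ
    · obtain ⟨i, hSi, hi⟩ := hasc
      have hinc := invNum_mul_sg_of_ascent hi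
      have hle := invNum_le (g * sg i)
      obtain ⟨h', hmem, hdesc⟩ := ih ((n+1)*(n+1) - invNum (g * sg i)) (by omega) (g * sg i) rfl
      refine ⟨sg i * h', ?_, ?_⟩
      · exact Subgroup.mul_mem _ (Subgroup.subset_closure ⟨i, rfl, hSi⟩) hmem
      · rwa [← mul_assoc]
    · push_neg at hasc
      refine ⟨1, Subgroup.one_mem _, ?_⟩
      rw [mul_one]
      intro i hSi
      exact lt_of_le_of_ne (hasc i hSi) (ne_apply i).symm

lemma exists_desc (S : Fin n → Prop) (g : Perm (Fin (n+1))) :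
    ∃ h ∈ GS S, Desc S (g * h) :=
  exists_desc_aux S _ g rfl

lemma index_GS (S : Fin n → Prop) :
    (GS S).index = Nat.card {τ : Perm (Fin (n+1)) // Desc S τ} := by
  rw [Subgroup.index_eq_card]
  refine (Nat.card_eq_of_bijective (fun τ : {τ : Perm (Fin (n+1)) // Desc S τ} =>
    (QuotientGroup.mk τ.val : Perm (Fin (n+1)) ⧸ GS S)) ⟨?_, ?_⟩).symm
  · rintro ⟨τ, hτ⟩ ⟨τ', hτ'⟩ heq
    simp only [QuotientGroup.eq] at heq
    have hmem : τ⁻¹ * τ' ∈ HS S := GS_le_HS S heq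
    have h2 : Desc S (τ * (τ⁻¹ * τ')) := by
      rw [← mul_assoc, mul_inv_cancel, one_mul]; exact hτ'
    have := desc_unique hmem hτ h2
    have : τ = τ' := by
      have h3 : τ⁻¹ * τ' = 1 := this
      have := congrArg (fun z => τ * z) h3
      simpa using this.symm
    exact Subtype.ext this
  · intro q
    obtain ⟨g, rfl⟩ := QuotientGroup.mk_surjective q
    obtain ⟨h, hmem, hdesc⟩ := exists_desc S g
    refine ⟨⟨g * h, hdesc⟩, ?_⟩
    rw [QuotientGroup.eq]
    simpa using Subgroup.inv_mem _ hmem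


lemma permP_eq (w : Perm (Fin (n+1))) :
    permP w = GS (fun i => w i.castSucc < w i.succ) := by
  rw [permP, GS]
  congr 1
  ext x
  simp only [Set.mem_setOf_eq]
  constructor
  · rintro ⟨i, hx, hlen⟩
    exact ⟨i, hx, ascent_iff.1 hlen⟩
  · rintro ⟨i, hx, hasc⟩
    exact ⟨i, hx, ascent_iff.2 hasc⟩

end NCR

/-- For the symmetric group `S_{n+1}` with its standard Coxeter generators,
`∑_{w} |P(w)\S_{n+1}|` equals the number of ordered pairs `(σ,τ)` of permutations of
`{1,…,n+1}` having no common rise, i.e. no index `i` with both `σ(i) < σ(i+1)` and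
`τ(i) < τ(i+1)`. -/
theorem sum_index_parabolic_eq_card_pairs_no_common_rise (n : ℕ) :
    ∑ w : Perm (Fin (n + 1)), (permP w).index =
      Nat.card {p : Perm (Fin (n + 1)) × Perm (Fin (n + 1)) //
        ¬ ∃ i : Fin n, p.1 i.castSucc < p.1 i.succ ∧ p.2 i.castSucc < p.2 i.succ} := by
  classical
  have h1 : ∀ w : Perm (Fin (n+1)), (permP w).index
      = Nat.card {τ : Perm (Fin (n+1)) // NCR.Desc (fun i => w i.castSucc < w i.succ) τ} := by
    intro w
    rw [NCR.permP_eq, NCR.index_GS]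
  have e : {p : Perm (Fin (n + 1)) × Perm (Fin (n + 1)) //
        ¬ ∃ i : Fin n, p.1 i.castSucc < p.1 i.succ ∧ p.2 i.castSucc < p.2 i.succ}
      ≃ Σ w : Perm (Fin (n+1)), {τ : Perm (Fin (n+1)) //
          NCR.Desc (fun i => w i.castSucc < w i.succ) τ} := by
    refine (Equiv.subtypeEquivRight ?_).trans
      (Equiv.subtypeProdEquivSigmaSubtype
        (fun w τ : Perm (Fin (n+1)) => NCR.Desc (fun i => w i.castSucc < w i.succ) τ))
    intro p
    rw [not_exists]
    apply forall_congr'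
    intro i
    constructor
    · intro hni hasc
      rw [not_and] at hni
      exact lt_of_le_of_ne (not_lt.1 (hni hasc)) (NCR.ne_apply (w := p.2) i).symm
    · intro hd ⟨ha1, ha2⟩
      exact absurd (hd ha1) ha2.asymm
  rw [Nat.card_congr e, Nat.card_eq_fintype_card, Fintype.card_sigma]
  rw [Finset.sum_congr rfl fun w _ => h1 w]
  apply Finset.sum_congr rfl
  intro w _
  rw [Nat.card_eq_fintype_card]
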